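/- Let L be a reflective subfibration on E and X an object of E such that the slice category Over X is cartesian closed. A morphism α : p ⟶ q in Over X is an L_X-equivalence if and only if for every object r of D_X the induced morphism on exponentials r^α : r^q ⟶ r^p is an isomorphism in Over X. -/

import Mathlib

open CategoryTheory CategoryTheory.Limits

universe v u

/-- A morphism `l` is uniquely left orthogonal to a morphism `r`. -/
def UniqueLift {C : Type*} [Category C] {A B X Y : C} (l : A ⟶ B) (r : X ⟶ Y) : Prop :=
  ∀ (u : A ⟶ X) (v : B ⟶ Y), u ≫ r = l ≫ v → ∃! d : B ⟶ X, l ≫ d = u ∧ d ≫ r = v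

variable (E : Type u) [Category.{v} E] [HasPullbacks E]

/-- A reflective subfibration on a category `E` with pullbacks: a pullback-stable
assignment of a reflective (full) subcategory `D X ⊆ Over X` for every `X : E`,
with reflector `Lf X` (the composite of the localization onto `D X` and the
inclusion) and unit `η X`, such that pullback functors preserve the subcategories
and the canonical comparison map `L_X (f* p) ⟶ f* (L_Y p)` is an isomorphism;
the latter is expressed by requiring that the pullback of a unit map is an
`L_X`-equivalence, which is equivalent to invertibility of the comparison map. -/
structure ReflectiveSubfibration where
  /-- membership in the reflective subcategory `D X ⊆ Over X` -/
  loc : ∀ {X : E}, Over X → Prop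
  /-- the localization functor `L_X : Over X ⥤ Over X` -/
  Lf : ∀ X : E, Over X ⥤ Over X
  /-- the unit of the localization -/
  η : ∀ X : E, 𝟭 (Over X) ⟶ Lf X
  loc_obj : ∀ (X : E) (p : Over X), loc ((Lf X).obj p)
  reflect : ∀ (X : E) (p d : Over X), loc d → ∀ g : p ⟶ d,
      ∃! h : (Lf X).obj p ⟶ d, (η X).app p ≫ h = g
  loc_pullback : ∀ {X Y : E} (f : X ⟶ Y) (p : Over Y),
      loc p → loc ((Over.pullback f).obj p)
  comparison_isIso : ∀ {X Y : E} (f : X ⟶ Y) (p : Over Y),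
      IsIso ((Lf X).map ((Over.pullback f).map ((η Y).app p)))

variable {E}

namespace ReflectiveSubfibration

variable (rsf : ReflectiveSubfibration E)

/-- A morphism `p : A ⟶ X` of `E` is `L`-local if it lies in `D X` as an object of `Over X`. -/
def LocalMap {A X : E} (p : A ⟶ X) : Prop := rsf.loc (Over.mk p)

/-- A morphism of `Over X` is an `L_X`-equivalence if `L_X` inverts it. -/
def Lequiv {X : E} {p q : Over X} (α : p ⟶ q) : Prop := IsIso ((rsf.Lf X).map α)

/-- A morphism `f : A ⟶ X` is `L`-connected if `L_X f` is a terminal object of `Over X`,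
i.e. its structure morphism to `X` is an isomorphism. -/
def Connected {A X : E} (f : A ⟶ X) : Prop := IsIso ((rsf.Lf X).obj (Over.mk f)).hom

/-- A morphism is `L`-separated if its diagonal is `L`-local. -/
def Separated {A X : E} (p : A ⟶ X) : Prop := rsf.LocalMap (pullback.diagonal p)

end ReflectiveSubfibration


namespace ReflectiveSubfibration

open CartesianClosed MonoidalClosed MonoidalCategory CartesianMonoidalCategory

variable (rsf : ReflectiveSubfibration E)

/-- Precomposition with the unit is a bijection into local objects. -/
lemma eta_comp_bijective {X : E} (a r : Over X) (hr : rsf.loc r) :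
    Function.Bijective (fun h : (rsf.Lf X).obj a ⟶ r => (rsf.η X).app a ≫ h) := by
  constructor
  · intro h₁ h₂ e
    obtain ⟨h, -, hu⟩ := rsf.reflect X a r hr ((rsf.η X).app a ≫ h₁)
    rw [hu h₁ rfl, hu h₂ e.symm]
  · intro g
    obtain ⟨h, hh, -⟩ := rsf.reflect X a r hr g
    exact ⟨h, hh⟩

/-- The criterion: a map is an `L`-equivalence iff precomposition with it is
bijective on homs into local objects. -/
lemma lequiv_iff_hom_bijective {X : E} {a b : Over X} (β : a ⟶ b) :
    rsf.Lequiv β ↔ ∀ r : Over X, rsf.loc r →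
      Function.Bijective (fun g : b ⟶ r => β ≫ g) := by
  have nat : β ≫ (rsf.η X).app b = (rsf.η X).app a ≫ (rsf.Lf X).map β := by
    simpa using (rsf.η X).naturality β
  constructor
  · intro h r hr
    haveI : IsIso ((rsf.Lf X).map β) := h
    constructor
    · intro g₁ g₂ hg
      replace hg : β ≫ g₁ = β ≫ g₂ := hg
      obtain ⟨h₁, hh₁⟩ := (rsf.eta_comp_bijective b r hr).2 g₁
      obtain ⟨h₂, hh₂⟩ := (rsf.eta_comp_bijective b r hr).2 g₂
      dsimp at hh₁ hh₂
      have e : (rsf.η X).app a ≫ (rsf.Lf X).map β ≫ h₁ =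
          (rsf.η X).app a ≫ (rsf.Lf X).map β ≫ h₂ := by
        rw [← Category.assoc, ← nat, ← Category.assoc, ← nat,
          Category.assoc, Category.assoc, hh₁, hh₂, hg]
      have e2 : (rsf.Lf X).map β ≫ h₁ = (rsf.Lf X).map β ≫ h₂ :=
        (rsf.eta_comp_bijective a r hr).1 e
      rw [← hh₁, ← hh₂, (cancel_epi ((rsf.Lf X).map β)).mp e2]
    · intro t
      obtain ⟨u, hu⟩ := (rsf.eta_comp_bijective a r hr).2 t
      dsimp at hu
      refine ⟨(rsf.η X).app b ≫ inv ((rsf.Lf X).map β) ≫ u, ?_⟩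
      dsimp
      rw [← Category.assoc, nat, Category.assoc, IsIso.hom_inv_id_assoc, hu]
  · intro h
    obtain ⟨d, hd0⟩ :=
      (h _ (rsf.loc_obj X a)).2 ((rsf.η X).app a)
    have hd : β ≫ d = (rsf.η X).app a := hd0
    obtain ⟨d', hd', -⟩ := rsf.reflect X b ((rsf.Lf X).obj a) (rsf.loc_obj X a) d
    have hdLβ : d ≫ (rsf.Lf X).map β = (rsf.η X).app b := by
      apply (h _ (rsf.loc_obj X b)).1
      dsimp
      rw [← Category.assoc, hd, nat]

    refine ⟨d', ?_, ?_⟩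
    · -- (Lf).map β ≫ d' = 𝟙
      obtain ⟨u, -, hu⟩ := rsf.reflect X a ((rsf.Lf X).obj a) (rsf.loc_obj X a)
        ((rsf.η X).app a)
      have h1 : (rsf.η X).app a ≫ ((rsf.Lf X).map β ≫ d') = (rsf.η X).app a := by
        rw [← Category.assoc, ← nat, Category.assoc, hd', hd]
      rw [hu _ h1, hu (𝟙 _) (Category.comp_id _)]
    · -- d' ≫ (Lf).map β = 𝟙
      obtain ⟨u, -, hu⟩ := rsf.reflect X b ((rsf.Lf X).obj b) (rsf.loc_obj X b)
        ((rsf.η X).app b)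
      have h1 : (rsf.η X).app b ≫ (d' ≫ (rsf.Lf X).map β) = (rsf.η X).app b := by
        rw [← Category.assoc, hd', hdLβ]
      rw [hu _ h1, hu (𝟙 _) (Category.comp_id _)]

/-- `L`-equivalences are stable under pullback. -/
lemma lequiv_pullback {X Y : E} (f : X ⟶ Y) {a b : Over Y} {β : a ⟶ b}
    (h : rsf.Lequiv β) : rsf.Lequiv ((Over.pullback f).map β) := by
  have nat : β ≫ (rsf.η Y).app b = (rsf.η Y).app a ≫ (rsf.Lf Y).map β := by
    simpa using (rsf.η Y).naturality β
  haveI : IsIso ((rsf.Lf Y).map β) := h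
  have nat2 : (rsf.Lf X).map ((Over.pullback f).map β) ≫
      (rsf.Lf X).map ((Over.pullback f).map ((rsf.η Y).app b)) =
      (rsf.Lf X).map ((Over.pullback f).map ((rsf.η Y).app a)) ≫
      (rsf.Lf X).map ((Over.pullback f).map ((rsf.Lf Y).map β)) := by
    rw [← Functor.map_comp, ← Functor.map_comp, ← Functor.map_comp, ← Functor.map_comp,
      nat]
  haveI := rsf.comparison_isIso f a
  haveI := rsf.comparison_isIso f b
  have : (rsf.Lf X).map ((Over.pullback f).map β) =
      ((rsf.Lf X).map ((Over.pullback f).map ((rsf.η Y).app a)) ≫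
      (rsf.Lf X).map ((Over.pullback f).map ((rsf.Lf Y).map β))) ≫
      inv ((rsf.Lf X).map ((Over.pullback f).map ((rsf.η Y).app b))) := by
    rw [← nat2]; simp
  rw [Lequiv, this]
  infer_instance

/-- `L`-equivalences are stable under composition with `Over.map`. -/
lemma lequiv_map {Y X : E} (f : Y ⟶ X) {a b : Over Y} {β : a ⟶ b}
    (h : rsf.Lequiv β) : rsf.Lequiv ((Over.map f).map β) := by
  rw [rsf.lequiv_iff_hom_bijective] at h ⊢
  intro r hr
  have hb := h ((Over.pullback f).obj r) (rsf.loc_pullback f r hr)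
  have key : (fun g : (Over.map f).obj b ⟶ r => (Over.map f).map β ≫ g) =
      ((Over.mapPullbackAdj f).homEquiv a r).symm ∘
      (fun g : b ⟶ (Over.pullback f).obj r => β ≫ g) ∘
      ((Over.mapPullbackAdj f).homEquiv b r) := by
    funext g
    dsimp
    rw [← Adjunction.homEquiv_naturality_left, Equiv.symm_apply_apply]
  rw [key]
  exact (((Over.mapPullbackAdj f).homEquiv a r).symm.bijective.comp
    (hb.comp ((Over.mapPullbackAdj f).homEquiv b r).bijective))

variable {X : E} [CartesianMonoidalCategory (Over X)]

/-- The chosen product with `s` in `Over X` is the pullback along `s.hom` followed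
by composition with `s.hom`. -/
noncomputable def prodIsoMapPullback (c s : Over X) :
    c ⊗ s ≅ (Over.map s.hom).obj ((Over.pullback s.hom).obj c) :=
  Over.isoMk (Over.isPullback_of_binaryFan_isLimit (BinaryFan.mk (fst c s) (snd c s))
      (tensorProductIsBinaryProduct c s)).isoPullback
    (by
      dsimp
      erw [← Category.assoc, IsPullback.isoPullback_hom_snd]
      exact Over.w (snd c s))

lemma prodIsoMapPullback_natural {a b : Over X} (β : a ⟶ b) (s : Over X) :
    β ▷ s ≫ (prodIsoMapPullback b s).hom =
      (prodIsoMapPullback a s).hom ≫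
        (Over.map s.hom).map ((Over.pullback s.hom).map β) := by
  have hfst : ∀ c : Over X,
      (Over.isPullback_of_binaryFan_isLimit (BinaryFan.mk (fst c s) (snd c s))
        (tensorProductIsBinaryProduct c s)).isoPullback.hom ≫ pullback.fst c.hom s.hom =
        (fst c s).left :=
    fun c => IsPullback.isoPullback_hom_fst _
  have hsnd : ∀ c : Over X,
      (Over.isPullback_of_binaryFan_isLimit (BinaryFan.mk (fst c s) (snd c s))
        (tensorProductIsBinaryProduct c s)).isoPullback.hom ≫ pullback.snd c.hom s.hom =
        (snd c s).left :=
    fun c => IsPullback.isoPullback_hom_snd _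
  ext
  dsimp [prodIsoMapPullback]
  apply pullback.hom_ext
  · simp only [Category.assoc, pullback.lift_fst, Over.pullback_map_left, Over.isoMk_hom_left]
    erw [hfst b, ← Category.assoc _ (pullback.fst _ _), hfst a]
    rw [← Over.comp_left, ← Over.comp_left, whiskerRight_fst]
  · simp only [Category.assoc, pullback.lift_snd, Over.pullback_map_left, Over.isoMk_hom_left]
    erw [hsnd b, hsnd a]
    rw [← Over.comp_left, whiskerRight_snd]

/-- `L`-equivalences are stable under right whiskering by the chosen products. -/
lemma lequiv_whiskerRight {a b : Over X} {β : a ⟶ b} (s : Over X)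
    (h : rsf.Lequiv β) : rsf.Lequiv (β ▷ s) := by
  have hβ : β ▷ s = (prodIsoMapPullback a s).hom ≫
      (Over.map s.hom).map ((Over.pullback s.hom).map β) ≫
      (prodIsoMapPullback b s).inv := by
    rw [← Category.assoc, ← prodIsoMapPullback_natural]
    simp
  have hG : rsf.Lequiv ((Over.map s.hom).map ((Over.pullback s.hom).map β)) :=
    rsf.lequiv_map s.hom (rsf.lequiv_pullback s.hom h)
  haveI : IsIso ((rsf.Lf X).map ((Over.map s.hom).map ((Over.pullback s.hom).map β))) := hG
  rw [Lequiv, hβ, Functor.map_comp, Functor.map_comp]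
  infer_instance

end ReflectiveSubfibration

section CCCAux

open CartesianClosed MonoidalClosed MonoidalCategory

variable {C : Type*} [Category C] [CartesianMonoidalCategory C] [MonoidalClosed C]

lemma comp_pre_app {p q r s : C} (α : p ⟶ q) (g : s ⟶ q ⟹ r) :
    g ≫ (pre α).app r = MonoidalClosed.curry (α ▷ s ≫ MonoidalClosed.uncurry g) := by
  rw [eq_curry_iff, uncurry_natural_left, uncurry_pre, uncurry_eq,
    ← whisker_exchange_assoc]

end CCCAux

/-- If `Over X` is cartesian closed, a morphism `α : p ⟶ q` of `Over X` is an
`L_X`-equivalence iff for every `r ∈ D_X` the induced map on exponentials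
`r^α : r^q ⟶ r^p` is an isomorphism. -/
theorem lequiv_iff_exp_isIso (rsf : ReflectiveSubfibration E) (X : E)
    [CartesianMonoidalCategory (Over X)] [MonoidalClosed (Over X)]
    {p q : Over X} (α : p ⟶ q) :
    rsf.Lequiv α ↔ ∀ r : Over X, rsf.loc r → IsIso ((MonoidalClosed.pre α).app r) := by
  open CartesianClosed MonoidalClosed MonoidalCategory in
  constructor
  · intro h r hr
    have B : ∀ s : Over X,
        Function.Bijective (fun g : s ⟶ q ⟹ r => g ≫ (pre α).app r) := by
      intro s
      have hw : rsf.Lequiv (α ▷ s) := rsf.lequiv_whiskerRight s h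
      have hb := (rsf.lequiv_iff_hom_bijective (α ▷ s)).mp hw r hr
      have key : (fun g : s ⟶ q ⟹ r => g ≫ (pre α).app r) =
          (fun u : p ⊗ s ⟶ r => MonoidalClosed.curry u) ∘
          (fun u : q ⊗ s ⟶ r => α ▷ s ≫ u) ∘
          (fun g : s ⟶ q ⟹ r => MonoidalClosed.uncurry g) := by
        funext g
        exact comp_pre_app α g
      rw [key]
      exact (((ihom.adjunction p).homEquiv s r).bijective.comp
        (hb.comp ((ihom.adjunction q).homEquiv s r).symm.bijective))
    obtain ⟨k, hk0⟩ := (B (p ⟹ r)).2 (𝟙 _)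
    have hk : k ≫ (pre α).app r = 𝟙 _ := hk0
    have hk2 : (pre α).app r ≫ k = 𝟙 _ := by
      apply (B (q ⟹ r)).1
      show ((pre α).app r ≫ k) ≫ (pre α).app r = 𝟙 _ ≫ (pre α).app r
      rw [Category.assoc, hk, Category.comp_id, Category.id_comp]
    exact ⟨k, hk2, hk⟩
  · intro h
    rw [rsf.lequiv_iff_hom_bijective]
    intro r hr
    haveI := h r hr
    let Φ : ∀ c : Over X, (c ⟶ r) ≃ (𝟙_ (Over X) ⟶ c ⟹ r) := fun c =>
      (Iso.homFromEquiv (ρ_ c)).symm.trans ((ihom.adjunction c).homEquiv (𝟙_ _) r)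
    have hΦ : ∀ (c : Over X) (g : c ⟶ r),
        Φ c g = MonoidalClosed.curry ((ρ_ c).hom ≫ g) := fun c g => rfl
    have key : ∀ g : q ⟶ r, (Φ q) g ≫ (pre α).app r = (Φ p) (α ≫ g) := by
      intro g
      rw [hΦ, hΦ, comp_pre_app, MonoidalClosed.uncurry_curry,
        ← rightUnitor_naturality_assoc]
    have keyfun : (fun g : q ⟶ r => α ≫ g) =
        (Φ p).symm ∘ (fun t : 𝟙_ (Over X) ⟶ q ⟹ r => t ≫ (pre α).app r) ∘ (Φ q) := by
      funext g
      dsimp only [Function.comp]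
      rw [key g, Equiv.symm_apply_apply]
    rw [keyfun]
    exact ((Φ p).symm.bijective.comp
      (((Iso.homToEquiv (asIso ((pre α).app r))).bijective).comp (Φ q).bijective))
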